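/- Let D = −3n² with n a positive integer and let P = (x₀, y₀) be a rational point on E^{−27D} : y² = 4x³ − 27D with x₀ ≠ 0 and such that X³ − x₀X² + D is irreducible over ℚ. Then ℚ[X]/(X³ − x₀X² + D) is isomorphic to the pure cubic field ℚ(∛((y₀ − 9n)/(y₀ + 9n))). -/

import Mathlib

set_option maxHeartbeats 1000000


open Polynomial

/-- The key algebraic identity, valid in any commutative ring: if `y² = 4x³ + 81n²`
and `T³ = xT² + 3n²`, then the element `v = nx(9n−y) + (−2x³+3ny−27n²)T + 2x²T²`
satisfies `v³(y+9n) = (y−9n)·8n³x³y³`. -/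
lemma cube_root_identity {K : Type*} [CommRing K] (x y n T : K)
    (hc : y ^ 2 = 4 * x ^ 3 + 81 * n ^ 2) (ht : T ^ 3 = x * T ^ 2 + 3 * n ^ 2) :
    (n * x * (9 * n - y) + (-2 * x ^ 3 + 3 * n * y - 27 * n ^ 2) * T
        + 2 * x ^ 2 * T ^ 2) ^ 3 * (y + 9 * n)
      = (y - 9 * n) * (8 * n ^ 3 * x ^ 3 * y ^ 3) := by
  linear_combination
    (-177147*n^7 + 39366*y*n^6 + -486*y^3*n^4 + 27*y^4*n^3 + 39366*x^2*n^5*T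
      + -4374*x^2*y*n^4*T + -486*x^2*y^2*n^3*T + 54*x^2*y^3*n^2*T + -26244*x^3*n^5
      + 2916*x^3*y*n^4 + 324*x^3*y^2*n^3 + -36*x^3*y^3*n^2 + -2916*x^4*n^3*T^2
      + 36*x^4*y^2*n*T^2 + 3888*x^5*n^3*T + -48*x^5*y^2*n*T + 72*x^6*n*T^3
      + -756*x^6*n^3 + 8*x^6*y*T^3 + 24*x^6*y*n^2 + 12*x^6*y^2*n + -144*x^7*n*T^2
      + -16*x^7*y*T^2 + 72*x^8*n*T + 8*x^8*y*T) * ht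
    + (6561*n^7 + -1458*y*n^6 + 81*y^2*n^5 + -729*x^2*n^5*T + 9*x^2*y^2*n^3*T
      + 567*x^3*n^5 + -18*x^3*y*n^4 + -9*x^3*y^2*n^3 + 54*x^4*n^3*T^2
      + 6*x^4*y*n^2*T^2 + -54*x^5*n^3*T + -6*x^5*y*n^2*T) * hc

/-- An irreducible polynomial of degree at least 2 over a field has no root. -/
lemma irreducible_no_root {p : ℚ[X]} (hp : Irreducible p) (hdeg : 2 ≤ p.natDegree)
    (r : ℚ) : ¬ p.IsRoot r := by
  intro hroot
  obtain ⟨q, hq⟩ := (dvd_iff_isRoot.2 hroot : X - C r ∣ p)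
  have hp0 : p ≠ 0 := fun h => by simp [h] at hdeg
  have hq0 : q ≠ 0 := fun h => hp0 (by simp [hq, h])
  rcases hp.isUnit_or_isUnit hq with h | h
  · have := natDegree_eq_zero_of_isUnit h
    simp [natDegree_X_sub_C] at this
  · have hdq : q.natDegree = 0 := natDegree_eq_zero_of_isUnit h
    have : p.natDegree = 1 := by
      rw [hq, natDegree_mul (X_sub_C_ne_zero r) hq0, natDegree_X_sub_C, hdq]
    omega

/-- Let `D = −3n²` with `n` a positive integer, and let `P = (x₀, y₀)` be a rational
point on `E^{−27D} : y² = 4x³ − 27D = 4x³ + 81n²` with `x₀ ≠ 0`, such that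
`X³ − x₀X² + D` is irreducible over `ℚ`.  Then `ℚ[X]/(X³ − x₀X² + D)` is isomorphic
to the pure cubic field `ℚ(∛((y₀ − 9n)/(y₀ + 9n)))`. -/
theorem LP_isomorphic_pure_cubic (n : ℕ) (hn : 0 < n) (x₀ y₀ : ℚ)
    (hE : y₀ ^ 2 = 4 * x₀ ^ 3 + 81 * (n : ℚ) ^ 2) (hx₀ : x₀ ≠ 0)
    (hirr : Irreducible (X ^ 3 - C x₀ * X ^ 2 + C (-3 * (n : ℚ) ^ 2))) :
    Nonempty
      (AdjoinRoot (X ^ 3 - C x₀ * X ^ 2 + C (-3 * (n : ℚ) ^ 2)) ≃ₐ[ℚ]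
        AdjoinRoot (X ^ 3 - C ((y₀ - 9 * n) / (y₀ + 9 * n)))) := by
  set f : ℚ[X] := X ^ 3 - C x₀ * X ^ 2 + C (-3 * (n : ℚ) ^ 2) with hfdef
  set m : ℚ := (y₀ - 9 * n) / (y₀ + 9 * n) with hmdef
  have hn' : (n : ℚ) ≠ 0 := Nat.cast_ne_zero.2 hn.ne'
  -- basic degree facts about `f`
  have hfd : f.natDegree = 3 := by rw [hfdef]; compute_degree!
  have hf0 : f ≠ 0 := fun h => by simp [h] at hfd
  -- `y₀ ≠ ±9n`
  have hy9p : y₀ - 9 * n ≠ 0 := by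
    intro h
    have hx3 : x₀ ^ 3 = 0 := by nlinarith [hE]
    exact hx₀ ((pow_eq_zero_iff (three_ne_zero)).mp hx3)
  have hy9m : y₀ + 9 * n ≠ 0 := by
    intro h
    have hx3 : x₀ ^ 3 = 0 := by nlinarith [hE]
    exact hx₀ ((pow_eq_zero_iff (three_ne_zero)).mp hx3)
  -- `y₀ ≠ 0`, since otherwise `f` would have the rational root `-x₀/3`
  have hy0 : y₀ ≠ 0 := by
    intro h
    apply irreducible_no_root hirr (by rw [hfd]; norm_num) (-x₀ / 3)
    show f.eval (-x₀ / 3) = 0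
    rw [hfdef]
    simp only [eval_add, eval_sub, eval_mul, eval_pow, eval_X, eval_C]
    rw [h] at hE
    field_simp
    linarith [hE]
  have hm0 : m ≠ 0 := div_ne_zero hy9p hy9m
  -- the field `K = ℚ[X]/(f)` and its degree
  haveI hfactf : Fact (Irreducible f) := ⟨hirr⟩
  set K := AdjoinRoot f with hKdef
  set θ : K := AdjoinRoot.root f with hθdef
  set i : ℚ →+* K := algebraMap ℚ K with hidef
  have iNe : ∀ q : ℚ, q ≠ 0 → i q ≠ 0 := by
    intro q hq h
    exact hq (i.injective (by rw [h, map_zero]))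
  haveI : Module.Finite ℚ K := (AdjoinRoot.powerBasis hf0).finite
  have h3 : Module.finrank ℚ K = 3 := by
    rw [(AdjoinRoot.powerBasis hf0).finrank]
    simpa [AdjoinRoot.powerBasis] using hfd
  -- the equation for θ
  have hroot : (aeval θ) f = 0 := by
    rw [hθdef, aeval_def]; exact AdjoinRoot.eval₂_root f
  have ht : θ ^ 3 = i x₀ * θ ^ 2 + 3 * (i n) ^ 2 := by
    have hroot' : (aeval θ) (X ^ 3 - C x₀ * X ^ 2 + C (-3 * (n : ℚ) ^ 2)) = 0 :=
      hroot
    simp only [map_add, map_sub, map_mul, map_pow, map_neg, map_ofNat, aeval_X,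
      aeval_C] at hroot'
    simp only [← hidef] at hroot'
    linear_combination hroot'
  have hc : (i y₀) ^ 2 = 4 * (i x₀) ^ 3 + 81 * (i n) ^ 2 := by
    have := congrArg i hE
    rw [map_pow, map_add, map_mul, map_mul, map_pow, map_pow, map_ofNat, map_ofNat]
      at this
    exact this
  -- the element `u` whose cube is `m`
  set a : ℚ := (9 * n - y₀) / (2 * y₀) with hadef
  set b : ℚ := (-2 * x₀ ^ 3 + 3 * n * y₀ - 27 * (n : ℚ) ^ 2) / (2 * n * x₀ * y₀)
    with hbdef
  set c : ℚ := x₀ / (n * y₀) with hcdef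
  have hcne : c ≠ 0 := div_ne_zero hx₀ (mul_ne_zero hn' hy0)
  set u : K := i a + i b * θ + i c * θ ^ 2 with hudef
  set D : ℚ := 2 * n * x₀ * y₀ with hDdef
  have hD0 : D ≠ 0 := by
    rw [hDdef]
    exact mul_ne_zero (mul_ne_zero (mul_ne_zero two_ne_zero hn') hx₀) hy0
  set V : K := i n * i x₀ * (9 * i n - i y₀)
      + (-2 * (i x₀) ^ 3 + 3 * i n * i y₀ - 27 * (i n) ^ 2) * θ
      + 2 * (i x₀) ^ 2 * θ ^ 2 with hVdef
  have hV : i D * u = V := by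
    have ha' : D * a = n * x₀ * (9 * n - y₀) := by
      rw [hadef, hDdef]; field_simp
    have hb' : D * b = -2 * x₀ ^ 3 + 3 * n * y₀ - 27 * (n : ℚ) ^ 2 := by
      rw [hbdef, hDdef]; field_simp
    have hc' : D * c = 2 * x₀ ^ 2 := by
      rw [hcdef, hDdef]; field_simp
    rw [hudef, hVdef]
    rw [mul_add, mul_add, ← mul_assoc (i D) (i b) θ, ← mul_assoc (i D) (i c) (θ^2),
      ← map_mul, ← map_mul, ← map_mul, ha', hb', hc']
    push_cast
    simp only [map_mul, map_sub, map_add, map_pow, map_neg, map_ofNat]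
    try ring
  have key := cube_root_identity (i x₀) (i y₀) (i n) θ hc ht
  rw [← hVdef] at key
  have hu : u ^ 3 = i m := by
    have hDD : D ^ 3 * (y₀ + 9 * n) ≠ 0 := mul_ne_zero (pow_ne_zero _ hD0) hy9m
    apply mul_right_cancel₀ (iNe _ hDD)
    have e2 : i (y₀ + 9 * n) = i y₀ + 9 * i n := by
      rw [map_add, map_mul, map_ofNat]
    have e3 : i (y₀ - 9 * n) = i y₀ - 9 * i n := by
      rw [map_sub, map_mul, map_ofNat]
    have e5 : i (D ^ 3) = 8 * (i n) ^ 3 * (i x₀) ^ 3 * (i y₀) ^ 3 := by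
      rw [hDdef, map_pow, map_mul, map_mul, map_mul, map_ofNat]; ring
    rw [map_mul]
    calc u ^ 3 * (i (D ^ 3) * i (y₀ + 9 * n))
        = (i D * u) ^ 3 * i (y₀ + 9 * n) := by rw [map_pow]; ring
      _ = V ^ 3 * (i y₀ + 9 * i n) := by rw [hV, e2]
      _ = (i y₀ - 9 * i n) * (8 * (i n) ^ 3 * (i x₀) ^ 3 * (i y₀) ^ 3) := key
      _ = i (y₀ - 9 * n) * i (D ^ 3) := by rw [e3, e5]
      _ = i m * (i (D ^ 3) * i (y₀ + 9 * n)) := by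
          rw [← map_mul, ← map_mul, ← map_mul]
          congr 1
          rw [hmdef, hDdef]
          field_simp
  -- the minimal polynomial of u is X³ − m
  set g : ℚ[X] := X ^ 3 - C m with hgdef
  have hgm : g.Monic := monic_X_pow_sub_C m (by norm_num)
  have hgd : g.natDegree = 3 := natDegree_X_pow_sub_C
  have hg0 : g ≠ 0 := hgm.ne_zero
  have hgu : (aeval u) g = 0 := by
    rw [hgdef]
    simp only [map_sub, map_pow, aeval_X, aeval_C]
    rw [hu]
    exact sub_self _
  have hint : IsIntegral ℚ u := IsIntegral.of_finite ℚ u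
  -- u is not rational
  have hnotrat : ∀ s : ℚ, u ≠ i s := by
    intro s hs
    set p : ℚ[X] := C (a - s) + C b * X + C c * X ^ 2 with hpdef
    have hap : (aeval θ) p = 0 := by
      rw [hpdef]
      simp only [map_add, map_mul, map_pow, aeval_X, aeval_C]
      have : i (a - s) = i a - i s := map_sub i a s
      rw [this]
      rw [hudef] at hs
      linear_combination hs
    have hdvd : f ∣ p := by
      rw [← AdjoinRoot.mk_eq_zero, ← AdjoinRoot.aeval_eq]
      exact hap
    have hple : p.natDegree ≤ 2 := by rw [hpdef]; compute_degree
    have : p = 0 := eq_zero_of_dvd_of_natDegree_lt hdvd (by omega)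
    have hc2 : p.coeff 2 = c := by
      rw [hpdef]
      simp [coeff_C, coeff_X]
    rw [this] at hc2
    exact hcne (by simpa using hc2.symm)
  have hdeg1 : (minpoly ℚ u).natDegree ≠ 1 := by
    intro h1
    have hmon := minpoly.monic hint
    have := hmon.eq_X_add_C h1
    have haev := minpoly.aeval ℚ u
    rw [this] at haev
    simp only [map_add, aeval_X, aeval_C] at haev
    exact hnotrat (-(minpoly ℚ u).coeff 0)
      (by rw [map_neg]; linear_combination haev)
  have hmind : (minpoly ℚ u).natDegree = 3 := by
    have hdvd3 : (minpoly ℚ u).natDegree ∣ 3 := by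
      rw [← h3]; exact minpoly.degree_dvd hint
    rcases (Nat.prime_three.eq_one_or_self_of_dvd _ hdvd3) with h | h
    · exact absurd h hdeg1
    · exact h
  have hmindvd : minpoly ℚ u ∣ g := minpoly.dvd ℚ u hgu
  have hmeq : minpoly ℚ u = g := by
    obtain ⟨q, hq⟩ := hmindvd
    have hmp0 : minpoly ℚ u ≠ 0 := (minpoly.monic hint).ne_zero
    have hq0 : q ≠ 0 := fun h => hg0 (by simp [hq, h])
    have hdq : q.natDegree = 0 := by
      have := natDegree_mul hmp0 hq0
      rw [← hq, hgd, hmind] at this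
      omega
    have hqC : q = C (q.coeff 0) := eq_C_of_natDegree_eq_zero hdq
    have hlc : q.coeff 0 = 1 := by
      have := hgm
      rw [Monic, hq, leadingCoeff_mul, (minpoly.monic hint).leadingCoeff, one_mul,
        hqC, leadingCoeff_C] at this
      exact this
    rw [hq, hqC, hlc, map_one, mul_one]
  have hgirr : Irreducible g := hmeq ▸ minpoly.irreducible hint
  haveI : Fact (Irreducible g) := ⟨hgirr⟩
  haveI : Module.Finite ℚ (AdjoinRoot g) := (AdjoinRoot.powerBasis hg0).finite
  have h3' : Module.finrank ℚ (AdjoinRoot g) = 3 := by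
    rw [(AdjoinRoot.powerBasis hg0).finrank]
    simpa [AdjoinRoot.powerBasis] using hgd
  set φ : AdjoinRoot g →ₐ[ℚ] K := AdjoinRoot.liftAlgHom g (Algebra.ofId ℚ K) u
    (by rw [aeval_def] at hgu; exact hgu) with hφdef
  have hinj : Function.Injective φ := φ.toRingHom.injective
  have hsurj : Function.Surjective φ := by
    have := (LinearMap.injective_iff_surjective_of_finrank_eq_finrank
      (f := φ.toLinearMap) (by rw [h3', h3])).mp hinj
    exact this
  exact ⟨(AlgEquiv.ofBijective φ ⟨hinj, hsurj⟩).symm⟩
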